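/- Let ψ : [0,1]² → ℝ² be the affine map ψ(x,y) = (5π/8, −7π/8) + x·(π/4, π/4) + y·(−π/2, π/2), and let g : ℝ² → ℂ be continuous with |g(p) − φ(p)| < 0.025 for all p ∈ ψ([0,1]²). Then for all x, y ∈ [0,1]: Re g(ψ(x,0)) < −0.025, Re g(ψ(x,1)) > 0.025, Im g(ψ(0,y)) < −0.025, and Im g(ψ(1,y)) > 0.025. -/

import Mathlib

open Real

/-- The function `φ(x,y) = (1/3)(e^{ix} + e^{iy} + e^{i(x+y)})`. -/
noncomputable def phi : ℝ × ℝ → ℂ := fun p =>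
  (1 / 3) * (Complex.exp (Complex.I * p.1) + Complex.exp (Complex.I * p.2) +
    Complex.exp (Complex.I * (p.1 + p.2)))

/-- The affine map `ψ(x,y) = (5π/8, −7π/8) + x·(π/4, π/4) + y·(−π/2, π/2)`. -/
noncomputable def psi : ℝ × ℝ → ℝ × ℝ := fun p =>
  (5 * π / 8 + p.1 * (π / 4) + p.2 * (-(π / 2)),
   -(7 * π / 8) + p.1 * (π / 4) + p.2 * (π / 2))

lemma phi_re (a b : ℝ) :
    (phi (a, b)).re = (Real.cos a + Real.cos b + Real.cos (a + b)) / 3 := by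
  show ((1 / 3 : ℂ) * (Complex.exp (Complex.I * a) + Complex.exp (Complex.I * b) +
      Complex.exp (Complex.I * ((a : ℂ) + b)))).re = _
  rw [show (Complex.I * (a:ℂ)) = ((a:ℝ):ℂ) * Complex.I from mul_comm _ _,
    show (Complex.I * (b:ℂ)) = ((b:ℝ):ℂ) * Complex.I from mul_comm _ _,
    show (Complex.I * ((a:ℂ) + b)) = (((a+b:ℝ)):ℂ) * Complex.I by push_cast; ring]
  simp [Complex.exp_ofReal_mul_I_re, Complex.mul_re, Complex.add_re, Complex.add_im]
  rw [show ((a:ℂ)+(b:ℂ))*Complex.I = ((a+b:ℝ):ℂ)*Complex.I by push_cast; ring,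
    Complex.exp_ofReal_mul_I_re]; ring

lemma phi_im (a b : ℝ) :
    (phi (a, b)).im = (Real.sin a + Real.sin b + Real.sin (a + b)) / 3 := by
  show ((1 / 3 : ℂ) * (Complex.exp (Complex.I * a) + Complex.exp (Complex.I * b) +
      Complex.exp (Complex.I * ((a : ℂ) + b)))).im = _
  rw [show (Complex.I * (a:ℂ)) = ((a:ℝ):ℂ) * Complex.I from mul_comm _ _,
    show (Complex.I * (b:ℂ)) = ((b:ℝ):ℂ) * Complex.I from mul_comm _ _,
    show (Complex.I * ((a:ℂ) + b)) = (((a+b:ℝ)):ℂ) * Complex.I by push_cast; ring]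
  simp [Complex.exp_ofReal_mul_I_im, Complex.mul_im, Complex.add_re, Complex.add_im]
  rw [show ((a:ℂ)+(b:ℂ))*Complex.I = ((a+b:ℝ):ℂ)*Complex.I by push_cast; ring,
    Complex.exp_ofReal_mul_I_im]; ring

lemma rsin_add_sin (x y : ℝ) :
    Real.sin x + Real.sin y = 2 * Real.sin ((x + y) / 2) * Real.cos ((x - y) / 2) := by
  exact_mod_cast Complex.sin_add_sin (x : ℂ) (y : ℂ)

lemma sqrt2_lb : (1.414 : ℝ) ≤ Real.sqrt 2 := by
  nlinarith [Real.sq_sqrt (by norm_num : (2:ℝ) ≥ 0), Real.sqrt_nonneg 2]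

lemma sqrt2_ub : Real.sqrt 2 ≤ 1.41422 := by
  nlinarith [Real.sq_sqrt (by norm_num : (2:ℝ) ≥ 0), Real.sqrt_nonneg 2]

lemma cos_three_pi_div_four : Real.cos (3 * π / 4) = -(Real.sqrt 2 / 2) := by
  rw [show 3 * π / 4 = π - π / 4 by ring, Real.cos_pi_sub, Real.cos_pi_div_four]

/-- Bound for the bottom edge. -/
lemma phi_bot (t : ℝ) (h0 : 0 ≤ t) (h1 : t ≤ π / 4) :
    (phi (5 * π / 8 + t, -(7 * π / 8) + t)).re ≤ -0.05 := by
  rw [phi_re, Real.cos_add_cos,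
    show (5 * π / 8 + t + (-(7 * π / 8) + t)) / 2 = t - π / 8 by ring,
    show (5 * π / 8 + t - (-(7 * π / 8) + t)) / 2 = 3 * π / 4 by ring,
    cos_three_pi_div_four,
    show 5 * π / 8 + t + (-(7 * π / 8) + t) = 2 * (t - π / 8) by ring,
    Real.cos_two_mul]
  set c := Real.cos (t - π / 8) with hc
  have hpi := pi_pos
  have hc0 : 0 ≤ c := Real.cos_nonneg_of_mem_Icc ⟨by nlinarith, by nlinarith⟩
  have hc1 : c ≤ 1 := Real.cos_le_one _
  nlinarith [sqrt2_lb, mul_nonneg hc0 (sub_nonneg.2 hc1)]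

lemma cos_pi_div_eight_sq : Real.cos (π / 8) ^ 2 = 1 / 2 + Real.sqrt 2 / 4 := by
  have h := Real.cos_sq (π / 8)
  rw [show 2 * (π / 8) = π / 4 by ring, Real.cos_pi_div_four] at h
  linarith

lemma sin_pi_div_eight_sq : Real.sin (π / 8) ^ 2 = 1 / 2 - Real.sqrt 2 / 4 := by
  have h := Real.sin_sq_add_cos_sq (π / 8)
  have := cos_pi_div_eight_sq
  linarith

/-- Bound for the top edge. -/
lemma phi_top (t : ℝ) (h0 : 0 ≤ t) (h1 : t ≤ π / 4) :
    (phi (π / 8 + t, -(3 * π / 8) + t)).re ≥ 0.05 := by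
  rw [phi_re, Real.cos_add_cos,
    show (π / 8 + t + (-(3 * π / 8) + t)) / 2 = t - π / 8 by ring,
    show (π / 8 + t - (-(3 * π / 8) + t)) / 2 = π / 4 by ring,
    Real.cos_pi_div_four,
    show π / 8 + t + (-(3 * π / 8) + t) = 2 * (t - π / 8) by ring,
    Real.cos_two_mul]
  set c := Real.cos (t - π / 8) with hc
  have hpi := pi_pos
  have hcge : Real.cos (π / 8) ≤ c := by
    rw [hc, ← Real.cos_abs (t - π / 8)]
    apply Real.cos_le_cos_of_nonneg_of_le_pi (abs_nonneg _) (by nlinarith)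
    rw [abs_le]; constructor <;> nlinarith
  have hcp : 0 ≤ Real.cos (π / 8) :=
    Real.cos_nonneg_of_mem_Icc ⟨by nlinarith, by nlinarith⟩
  have hc2 : c ^ 2 ≥ 1 / 2 + Real.sqrt 2 / 4 := by
    rw [← cos_pi_div_eight_sq]; nlinarith
  have hc0 : 0 ≤ c := le_trans hcp hcge
  nlinarith [sqrt2_lb, mul_nonneg (Real.sqrt_nonneg 2) hc0]

/-- The key numerical estimate: `√2 · sin(π/8) ≤ √2/2 − 0.15`. -/
lemma key_sin : Real.sqrt 2 * Real.sin (π / 8) ≤ Real.sqrt 2 / 2 - 0.15 := by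
  have hpi := pi_pos
  have hs0 : 0 ≤ Real.sin (π / 8) :=
    Real.sin_nonneg_of_nonneg_of_le_pi (by nlinarith) (by nlinarith)
  have hs2 := sin_pi_div_eight_sq
  have hub := sqrt2_ub
  have hlb := sqrt2_lb
  have hsub : Real.sin (π / 8) ≤ 0.383 := by nlinarith [sq_nonneg (Real.sin (π / 8) - 0.383)]
  nlinarith

/-- Bound for the left edge. -/
lemma phi_left (s : ℝ) (h0 : 0 ≤ s) (h1 : s ≤ π / 2) :
    (phi (5 * π / 8 - s, -(7 * π / 8) + s)).im ≤ -0.05 := by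
  rw [phi_im, rsin_add_sin,
    show (5 * π / 8 - s + (-(7 * π / 8) + s)) / 2 = -(π / 8) by ring,
    show (5 * π / 8 - s - (-(7 * π / 8) + s)) / 2 = 3 * π / 4 - s by ring,
    show 5 * π / 8 - s + (-(7 * π / 8) + s) = -(π / 4) by ring,
    Real.sin_neg, Real.sin_neg, Real.sin_pi_div_four]
  have hpi := pi_pos
  have hs0 : 0 ≤ Real.sin (π / 8) :=
    Real.sin_nonneg_of_nonneg_of_le_pi (by nlinarith) (by nlinarith)
  have hCge : -(Real.sqrt 2 / 2) ≤ Real.cos (3 * π / 4 - s) := by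
    rw [← cos_three_pi_div_four]
    exact Real.cos_le_cos_of_nonneg_of_le_pi (by nlinarith) (by nlinarith) (by nlinarith)
  have hk := key_sin
  nlinarith [mul_le_mul_of_nonneg_left hCge hs0]

/-- Bound for the right edge. -/
lemma phi_right (s : ℝ) (h0 : 0 ≤ s) (h1 : s ≤ π / 2) :
    (phi (7 * π / 8 - s, -(5 * π / 8) + s)).im ≥ 0.05 := by
  rw [phi_im, rsin_add_sin,
    show (7 * π / 8 - s + (-(5 * π / 8) + s)) / 2 = π / 8 by ring,
    show (7 * π / 8 - s - (-(5 * π / 8) + s)) / 2 = 3 * π / 4 - s by ring,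
    show 7 * π / 8 - s + (-(5 * π / 8) + s) = π / 4 by ring,
    Real.sin_pi_div_four]
  have hpi := pi_pos
  have hs0 : 0 ≤ Real.sin (π / 8) :=
    Real.sin_nonneg_of_nonneg_of_le_pi (by nlinarith) (by nlinarith)
  have hCge : -(Real.sqrt 2 / 2) ≤ Real.cos (3 * π / 4 - s) := by
    rw [← cos_three_pi_div_four]
    exact Real.cos_le_cos_of_nonneg_of_le_pi (by nlinarith) (by nlinarith) (by nlinarith)
  have hk := key_sin
  nlinarith [mul_le_mul_of_nonneg_left hCge hs0]

/-- If `|g − φ| < 0.025` on `ψ([0,1]²)`, then `g ∘ ψ` satisfies the Poincaré–Miranda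
sign conditions on the boundary of the unit square. -/
theorem g_psi_boundary_estimates (g : ℝ × ℝ → ℂ) (hg : Continuous g)
    (happrox : ∀ p ∈ psi '' (Set.Icc (0 : ℝ) 1 ×ˢ Set.Icc (0 : ℝ) 1),
      ‖g p - phi p‖ < 0.025) :
    ∀ x ∈ Set.Icc (0 : ℝ) 1, ∀ y ∈ Set.Icc (0 : ℝ) 1,
      (g (psi (x, 0))).re < -0.025 ∧ (g (psi (x, 1))).re > 0.025 ∧
      (g (psi (0, y))).im < -0.025 ∧ (g (psi (1, y))).im > 0.025 := by
  intro x hx y hy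
  have hpi := pi_pos
  have h01 : (0:ℝ) ∈ Set.Icc (0:ℝ) 1 := by norm_num
  have h11 : (1:ℝ) ∈ Set.Icc (0:ℝ) 1 := by norm_num
  have ht0 : 0 ≤ x * (π / 4) := by nlinarith [hx.1]
  have ht1 : x * (π / 4) ≤ π / 4 := by nlinarith [hx.2]
  have hs0 : 0 ≤ y * (π / 2) := by nlinarith [hy.1]
  have hs1 : y * (π / 2) ≤ π / 2 := by nlinarith [hy.2]
  -- the four points
  have e1 : psi (x, 0) = (5 * π / 8 + x * (π / 4), -(7 * π / 8) + x * (π / 4)) := by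
    simp only [psi, Prod.mk.injEq]; constructor <;> ring
  have e2 : psi (x, 1) = (π / 8 + x * (π / 4), -(3 * π / 8) + x * (π / 4)) := by
    simp only [psi, Prod.mk.injEq]; constructor <;> ring
  have e3 : psi (0, y) = (5 * π / 8 - y * (π / 2), -(7 * π / 8) + y * (π / 2)) := by
    simp only [psi, Prod.mk.injEq]; constructor <;> ring
  have e4 : psi (1, y) = (7 * π / 8 - y * (π / 2), -(5 * π / 8) + y * (π / 2)) := by
    simp only [psi, Prod.mk.injEq]; constructor <;> ring
  have m1 := happrox (psi (x, 0)) ⟨(x, 0), ⟨hx, h01⟩, rfl⟩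
  have m2 := happrox (psi (x, 1)) ⟨(x, 1), ⟨hx, h11⟩, rfl⟩
  have m3 := happrox (psi (0, y)) ⟨(0, y), ⟨h01, hy⟩, rfl⟩
  have m4 := happrox (psi (1, y)) ⟨(1, y), ⟨h11, hy⟩, rfl⟩
  have b1 := phi_bot (x * (π / 4)) ht0 ht1
  have b2 := phi_top (x * (π / 4)) ht0 ht1
  have b3 := phi_left (y * (π / 2)) hs0 hs1
  have b4 := phi_right (y * (π / 2)) hs0 hs1
  have a1 := Complex.abs_re_le_norm (g (psi (x, 0)) - phi (psi (x, 0)))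
  have a2 := Complex.abs_re_le_norm (g (psi (x, 1)) - phi (psi (x, 1)))
  have a3 := Complex.abs_im_le_norm (g (psi (0, y)) - phi (psi (0, y)))
  have a4 := Complex.abs_im_le_norm (g (psi (1, y)) - phi (psi (1, y)))
  rw [Complex.sub_re] at a1 a2
  rw [Complex.sub_im] at a3 a4
  rw [e1] at m1 a1 ⊢
  rw [e2] at m2 a2 ⊢
  rw [e3] at m3 a3 ⊢
  rw [e4] at m4 a4 ⊢
  have d1 := abs_lt.1 (lt_of_le_of_lt a1 m1)
  have d2 := abs_lt.1 (lt_of_le_of_lt a2 m2)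
  have d3 := abs_lt.1 (lt_of_le_of_lt a3 m3)
  have d4 := abs_lt.1 (lt_of_le_of_lt a4 m4)
  refine ⟨by linarith [d1.2], by linarith [d2.1], by linarith [d3.2], by linarith [d4.1]⟩
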